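/- Let H be a complex Hadamard matrix of order n, let {R, R₁, R₂} be a partition of its set of rows and {C, C₁, C₂} a partition of its set of columns with R and R₁ nonempty, and let s ∈ ℂ be such that: (1) Σ_{i∈R} H_{ij} = s for all j ∈ C; (2) Σ_{i∈R₁} H_{ij} = −conj(s) for all j ∈ C₁; (3) H_{ij} = 1 for all (i,j) ∈ R × C₁ and all (i,j) ∈ R₁ × C; (4) Σ_{i∈R} H_{ij} = 0 and Σ_{i∈R₁} H_{ij} = 0 for all j ∈ C₂. Then there exists r ∈ ℂ with |R|·r = |C|·s such that: (i) every row of the submatrix with rows R and columns C sums to r, i.e. Σ_{j∈C} H_{ij} = r for all i ∈ R; (ii) every row of the submatrix with rows R₁ and columns C₁ sums to −conj(r), i.e. Σ_{j∈C₁} H_{ij} = −conj(r) for all i ∈ R₁; and (iii) for every i ∈ R₂, both Σ_{j∈C} H_{ij} = 0 and Σ_{j∈C₁} H_{ij} = 0. -/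

import Mathlib

/-- Equivalent row conditions for rank 2 switchings (Corollary `col-row`): if a complex
Hadamard matrix satisfies the column conditions (1)-(4) for partitions `{R, R₁, R₂}` and
`{C, C₁, C₂}`, then there is `r ∈ ℂ` with `|R|·r = |C|·s` such that the corresponding row
conditions hold: every row sum of the `R × C` submatrix equals `r`, every row sum of the
`R₁ × C₁` submatrix equals `-conj r`, and every row from `R₂` sums to zero over both `C`
and `C₁`. -/
theorem stmt_10 (n : ℕ) (H : Matrix (Fin n) (Fin n) ℂ)
    (hent : ∀ i j, ‖H i j‖ = 1)
    (hHad : H * H.conjTranspose = (n : ℂ) • 1)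
    (R R₁ R₂ C C₁ C₂ : Finset (Fin n))
    (hRne : R.Nonempty) (hR1ne : R₁.Nonempty)
    (hRcover : R ∪ R₁ ∪ R₂ = Finset.univ)
    (hR01 : Disjoint R R₁) (hR02 : Disjoint R R₂) (hR12 : Disjoint R₁ R₂)
    (hCcover : C ∪ C₁ ∪ C₂ = Finset.univ)
    (hC01 : Disjoint C C₁) (hC02 : Disjoint C C₂) (hC12 : Disjoint C₁ C₂)
    (s : ℂ)
    (h1 : ∀ j ∈ C, ∑ i ∈ R, H i j = s)
    (h2 : ∀ j ∈ C₁, ∑ i ∈ R₁, H i j = -(starRingEnd ℂ) s)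
    (h3 : (∀ i ∈ R, ∀ j ∈ C₁, H i j = 1) ∧ (∀ i ∈ R₁, ∀ j ∈ C, H i j = 1))
    (h4 : ∀ j ∈ C₂, ∑ i ∈ R, H i j = 0 ∧ ∑ i ∈ R₁, H i j = 0) :
    ∃ r : ℂ, (R.card : ℂ) * r = (C.card : ℂ) * s ∧
      (∀ i ∈ R, ∑ j ∈ C, H i j = r) ∧
      (∀ i ∈ R₁, ∑ j ∈ C₁, H i j = -(starRingEnd ℂ) r) ∧
      (∀ i ∈ R₂, ∑ j ∈ C, H i j = 0 ∧ ∑ j ∈ C₁, H i j = 0) := by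
  classical
  set c : ℂ := (starRingEnd ℂ) s with hc
  set p : ℂ := (R.card : ℂ) with hp
  set q : ℂ := (R₁.card : ℂ) with hq
  set d : ℂ := c * s + p * q with hd
  set u : Fin n → ℂ := fun i => ∑ j ∈ C, H i j with hu
  set v : Fin n → ℂ := fun i => ∑ j ∈ C₁, H i j with hv
  -- the determinant is nonzero
  have hdr : d = ((Complex.normSq s + R.card * R₁.card : ℝ) : ℂ) := by
    rw [hd, hc, hp, hq, mul_comm ((starRingEnd ℂ) s) s, Complex.mul_conj]
    push_cast
    ring
  have hdne : d ≠ 0 := by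
    rw [hdr]
    have h1 : (0:ℝ) < Complex.normSq s + R.card * R₁.card := by
      have : (0:ℝ) < (R.card : ℝ) * R₁.card := by
        have := hRne.card_pos
        have := hR1ne.card_pos
        positivity
      nlinarith [Complex.normSq_nonneg s]
    exact_mod_cast Complex.ofReal_ne_zero.mpr h1.ne'
  -- d is self-conjugate
  have hdconj : (starRingEnd ℂ) d = d := by
    rw [hd, hc, hp, hq]
    simp [map_add, map_mul, Complex.conj_conj, mul_comm]
  -- orthogonality of rows
  have orth : ∀ i k, ∑ j, H i j * (starRingEnd ℂ) (H k j) =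
      if i = k then (n : ℂ) else 0 := by
    intro i k
    have h := congrFun (congrFun hHad i) k
    rw [Matrix.mul_apply] at h
    simp only [Matrix.conjTranspose_apply, Matrix.smul_apply, Matrix.one_apply,
      smul_eq_mul, mul_ite, mul_one, mul_zero] at h
    simpa using h
  -- splitting a sum over all columns
  have hCsplit : ∀ f : Fin n → ℂ,
      ∑ j, f j = ∑ j ∈ C, f j + ∑ j ∈ C₁, f j + ∑ j ∈ C₂, f j := by
    intro f
    have hdisj : Disjoint (C ∪ C₁) C₂ := Finset.disjoint_union_left.mpr ⟨hC02, hC12⟩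
    rw [← hCcover, Finset.sum_union hdisj, Finset.sum_union hC01]
  -- generic: summing orthogonality over a set of rows
  have key : ∀ (S : Finset (Fin n)) (i : Fin n),
      ∑ j, H i j * (starRingEnd ℂ) (∑ k ∈ S, H k j) =
        if i ∈ S then (n : ℂ) else 0 := by
    intro S i
    have := Finset.sum_ite_eq S i (fun _ => (n : ℂ))
    calc ∑ j, H i j * (starRingEnd ℂ) (∑ k ∈ S, H k j)
        = ∑ j, ∑ k ∈ S, H i j * (starRingEnd ℂ) (H k j) := by
          simp [map_sum, Finset.mul_sum]
      _ = ∑ k ∈ S, ∑ j, H i j * (starRingEnd ℂ) (H k j) := Finset.sum_comm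
      _ = ∑ k ∈ S, if i = k then (n : ℂ) else 0 := by
          simp_rw [orth]
      _ = if i ∈ S then (n : ℂ) else 0 := Finset.sum_ite_eq S i (fun _ => (n : ℂ))
  -- first linear equation
  have E1 : ∀ i, c * u i + p * v i = if i ∈ R then (n : ℂ) else 0 := by
    intro i
    have h := key R i
    rw [hCsplit (fun j => H i j * (starRingEnd ℂ) (∑ k ∈ R, H k j))] at h
    have hA : ∑ j ∈ C, H i j * (starRingEnd ℂ) (∑ k ∈ R, H k j) = c * u i := by
      rw [Finset.sum_congr rfl (fun j hj => by rw [h1 j hj]), ← Finset.sum_mul, hu]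
      ring
    have hB : ∑ j ∈ C₁, H i j * (starRingEnd ℂ) (∑ k ∈ R, H k j) = p * v i := by
      have : ∀ j ∈ C₁, (∑ k ∈ R, H k j) = p := by
        intro j hj
        rw [hp]
        rw [Finset.sum_congr rfl (fun k hk => h3.1 k hk j hj)]
        simp
      rw [Finset.sum_congr rfl (fun j hj => by
        rw [this j hj, hp, map_natCast]), ← Finset.sum_mul, hv]
      rw [hp]; ring
    have hC2 : ∑ j ∈ C₂, H i j * (starRingEnd ℂ) (∑ k ∈ R, H k j) = 0 := by
      refine Finset.sum_eq_zero fun j hj => ?_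
      rw [(h4 j hj).1]
      simp
    rw [hA, hB, hC2, add_zero] at h
    exact h
  -- second linear equation
  have E2 : ∀ i, q * u i - s * v i = if i ∈ R₁ then (n : ℂ) else 0 := by
    intro i
    have h := key R₁ i
    rw [hCsplit (fun j => H i j * (starRingEnd ℂ) (∑ k ∈ R₁, H k j))] at h
    have hA : ∑ j ∈ C, H i j * (starRingEnd ℂ) (∑ k ∈ R₁, H k j) = q * u i := by
      have : ∀ j ∈ C, (∑ k ∈ R₁, H k j) = q := by
        intro j hj
        rw [hq, Finset.sum_congr rfl (fun k hk => h3.2 k hk j hj)]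
        simp
      rw [Finset.sum_congr rfl (fun j hj => by
        rw [this j hj, hq, map_natCast]), ← Finset.sum_mul, hu]
      rw [hq]; ring
    have hB : ∑ j ∈ C₁, H i j * (starRingEnd ℂ) (∑ k ∈ R₁, H k j) = -(s * v i) := by
      rw [Finset.sum_congr rfl (fun j hj => by rw [h2 j hj])]
      simp only [hc, map_neg, Complex.conj_conj, mul_neg]
      rw [Finset.sum_neg_distrib, ← Finset.sum_mul, hv]
      ring
    have hC2 : ∑ j ∈ C₂, H i j * (starRingEnd ℂ) (∑ k ∈ R₁, H k j) = 0 := by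
      refine Finset.sum_eq_zero fun j hj => ?_
      rw [(h4 j hj).2]
      simp
    rw [hA, hB, hC2, add_zero] at h
    linear_combination h
  -- solve the linear system
  set r : ℂ := (n : ℂ) * s / d with hr
  have hri : ∀ i ∈ R, u i = r := by
    intro i hi
    have hiR1 : i ∉ R₁ := fun h => (Finset.disjoint_left.mp hR01) hi h
    have e1 := E1 i; rw [if_pos hi] at e1
    have e2 := E2 i; rw [if_neg hiR1] at e2
    have hdu : d * u i = (n : ℂ) * s := by
      rw [hd]; linear_combination s * e1 + p * e2
    rw [hr, eq_div_iff hdne]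
    linear_combination hdu
  have hpr : p * r = (C.card : ℂ) * s := by
    have h1' : ∑ i ∈ R, u i = (C.card : ℂ) * s := by
      rw [hu]
      beta_reduce
      refine Finset.sum_comm.trans ?_
      rw [Finset.sum_congr rfl (fun j hj => h1 j hj)]
      simp [mul_comm]
    have h2' : ∑ i ∈ R, u i = p * r := by
      rw [Finset.sum_congr rfl hri, Finset.sum_const, hp]
      simp [mul_comm]
    rw [← h2', h1']
  have hconjr : (starRingEnd ℂ) r = (n : ℂ) * c / d := by
    rw [hr, map_div₀, map_mul, map_natCast, hdconj, hc]
  have hr1 : ∀ i ∈ R₁, v i = -(starRingEnd ℂ) r := by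
    intro i hi
    have hiR : i ∉ R := fun h => (Finset.disjoint_left.mp hR01) h hi
    have e1 := E1 i; rw [if_neg hiR] at e1
    have e2 := E2 i; rw [if_pos hi] at e2
    have hdv : d * v i = -((n : ℂ) * c) := by
      rw [hd]; linear_combination q * e1 - c * e2
    rw [hconjr, neg_div', eq_div_iff hdne]
    linear_combination hdv
  have hR2z : ∀ i ∈ R₂, u i = 0 ∧ v i = 0 := by
    intro i hi
    have hiR : i ∉ R := fun h => (Finset.disjoint_left.mp hR02) h hi
    have hiR1 : i ∉ R₁ := fun h => (Finset.disjoint_left.mp hR12) h hi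
    have e1 := E1 i; rw [if_neg hiR] at e1
    have e2 := E2 i; rw [if_neg hiR1] at e2
    have hdu : d * u i = 0 := by rw [hd]; linear_combination s * e1 + p * e2
    have hdv : d * v i = 0 := by rw [hd]; linear_combination q * e1 - c * e2
    exact ⟨(mul_eq_zero.mp hdu).resolve_left hdne,
      (mul_eq_zero.mp hdv).resolve_left hdne⟩
  exact ⟨r, hpr, hri, hr1, hR2z⟩
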